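/- arXiv:1001.4494 — 6 statements merged into one kernel-verified Lean document; each statement's English description precedes it below -/
import Mathlib

section
/- The line set N_e = {e ∈ Im Ĥ : e₁ᵀJe₂ = 0} is invariant under the link dynamics: if e(t) solves ė₁ = e₂ψ₂ - e₁ψ₁, ė₂ = e₃ψ₃ - e₂ψ₂, ė₃ = e₁ψ₁ - e₃ψ₃ with e(0) ∈ N_e, then the derivative of t ↦ e₁(t)ᵀJe₂(t) vanishes whenever e₁ᵀJe₂ = 0 and e₁ + e₂ + e₃ = 0. -/
/-- `eᵢᵀ J eⱼ` for the planar 90° rotation `J = [[0,1],[-1,0]]`. -/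
def crossJ (u v : EuclideanSpace ℝ (Fin 2)) : ℝ := u 0 * v 1 - u 1 * v 0

lemma coord_deriv (e : ℝ → EuclideanSpace ℝ (Fin 2)) (v : EuclideanSpace ℝ (Fin 2))
    (t : ℝ) (h : HasDerivAt e v t) (i : Fin 2) :
    HasDerivAt (fun s => e s i) (v i) t := by
  have := (EuclideanSpace.proj i : EuclideanSpace ℝ (Fin 2) →L[ℝ] ℝ).hasFDerivAt.comp_hasDerivAt t h
  exact this

/-- Invariance of the line set: along the link dynamics, the derivative of
`t ↦ e₁(t)ᵀJe₂(t)` vanishes whenever `e₁ᵀJe₂ = 0` and `e₁ + e₂ + e₃ = 0`. -/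
theorem stmt_4 (d₁ d₂ d₃ : ℝ) (hd₁ : 0 < d₁) (hd₂ : 0 < d₂) (hd₃ : 0 < d₃)
    (e₁ e₂ e₃ : ℝ → EuclideanSpace ℝ (Fin 2)) (t : ℝ)
    (ψ₁ : ℝ → ℝ) (ψ₂ : ℝ → ℝ) (ψ₃ : ℝ → ℝ)
    (hψ₁ : ψ₁ = fun s => ‖e₁ s‖ ^ 2 - d₁ ^ 2)
    (hψ₂ : ψ₂ = fun s => ‖e₂ s‖ ^ 2 - d₂ ^ 2)
    (hψ₃ : ψ₃ = fun s => ‖e₃ s‖ ^ 2 - d₃ ^ 2)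
    (h₁ : HasDerivAt e₁ (ψ₂ t • e₂ t - ψ₁ t • e₁ t) t)
    (h₂ : HasDerivAt e₂ (ψ₃ t • e₃ t - ψ₂ t • e₂ t) t)
    (h₃ : HasDerivAt e₃ (ψ₁ t • e₁ t - ψ₃ t • e₃ t) t)
    (hcol : crossJ (e₁ t) (e₂ t) = 0)
    (hsum : e₁ t + e₂ t + e₃ t = 0) :
    HasDerivAt (fun s => crossJ (e₁ s) (e₂ s)) 0 t := by
  have a0 := coord_deriv e₁ _ t h₁ 0
  have a1 := coord_deriv e₁ _ t h₁ 1
  have b0 := coord_deriv e₂ _ t h₂ 0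
  have b1 := coord_deriv e₂ _ t h₂ 1
  have hD := ((a0.mul b1).sub (a1.mul b0))
  have key : (ψ₂ t • e₂ t - ψ₁ t • e₁ t) 0 * e₂ t 1 + e₁ t 0 * (ψ₃ t • e₃ t - ψ₂ t • e₂ t) 1 -
      ((ψ₂ t • e₂ t - ψ₁ t • e₁ t) 1 * e₂ t 0 + e₁ t 1 * (ψ₃ t • e₃ t - ψ₂ t • e₂ t) 0) = 0 := by
    have hs0 : e₁ t 0 + e₂ t 0 + e₃ t 0 = 0 := by
      have := congrArg (fun x => x 0) hsum; simpa using this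
    have hs1 : e₁ t 1 + e₂ t 1 + e₃ t 1 = 0 := by
      have := congrArg (fun x => x 1) hsum; simpa using this
    simp only [crossJ] at hcol
    simp only [PiLp.sub_apply, PiLp.smul_apply, smul_eq_mul]
    linear_combination (-ψ₁ t - ψ₂ t - ψ₃ t) * hcol + (ψ₃ t * e₁ t 0) * hs1 - (ψ₃ t * e₁ t 1) * hs0
  simpa [crossJ] using key ▸ hD
end

section
/- If e₁ + e₂ + e₃ = 0, e₁ψ₁ = e₂ψ₂ = e₃ψ₃, and e₁ᵀJe₂ = 0 (collinear equilibrium), where ψᵢ = ‖eᵢ‖² - dᵢ² and d₁, d₂, d₃ > 0 satisfy the strict triangle inequalities, then ψ₁ + ψ₂ + ψ₃ < 0. -/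
private lemma nsq2 (x : EuclideanSpace ℝ (Fin 2)) : ‖x‖^2 = x 0^2 + x 1^2 := by
  rw [EuclideanSpace.norm_eq, Real.sq_sqrt (by positivity)]
  simp [Fin.sum_univ_two, sq_abs]

private lemma collin (u v : EuclideanSpace ℝ (Fin 2)) (hu : u ≠ 0)
    (h : u 0 * v 1 - u 1 * v 0 = 0) : ∃ t : ℝ, v = t • u := by
  by_cases ha : u 0 = 0
  · have hb : u 1 ≠ 0 := by
      intro hb
      apply hu
      ext i
      fin_cases i <;> simp [ha, hb]
    refine ⟨v 1 / u 1, ?_⟩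
    ext i
    fin_cases i
    · show v 0 = (v 1 / u 1) * u 0
      rw [ha, mul_zero]
      have : u 1 * v 0 = 0 := by linear_combination -h + v 1 * ha
      rcases mul_eq_zero.1 this with h' | h'
      · exact absurd h' hb
      · exact h'
    · show v 1 = (v 1 / u 1) * u 1
      field_simp
  · refine ⟨v 0 / u 0, ?_⟩
    ext i
    fin_cases i
    · show v 0 = (v 0 / u 0) * u 0
      field_simp
    · show v 1 = (v 0 / u 0) * u 1
      field_simp
      linear_combination h

private lemma lonepos (a b c : ℝ) (ha : 0 < a) (hb : b < 0) (hc : c < 0)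
    (hp : a*b + a*c + b*c = 0) : a + b + c < 0 := by
  nlinarith [mul_pos (neg_pos.2 hb) (neg_pos.2 hc), sq_nonneg (b+c), sq_nonneg b, sq_nonneg c]

private lemma loneneg (dA dB dC tA tB tC : ℝ) (hdA : 0 < dA) (hdB : 0 < dB) (hdC : 0 < dC)
    (htri : dC < dA + dB)
    (hA : 0 < tA^2 - dA^2) (hB : 0 < tB^2 - dB^2) (hC : tC^2 - dC^2 < 0)
    (hsum : tA + tB + tC = 0)
    (hAB : (tA^2-dA^2)*tA = (tB^2-dB^2)*tB)
    (hw : (tA^2-dA^2)*tA ≠ 0) : False := by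
  have htA : tA ≠ 0 := fun h => hw (by rw [h]; ring)
  have hprod : 0 < tA * tB := by
    have h1 : ((tA^2-dA^2)*tA) * ((tB^2-dB^2)*tB) = ((tA^2-dA^2)*tA)^2 := by
      rw [hAB]; ring
    have h2 : 0 < ((tA^2-dA^2)*tA)^2 := by positivity
    nlinarith [mul_pos hA hB]
  rcases htA.lt_or_gt with h | h
  · have htB : tB < 0 := by nlinarith
    have h1 : tA < -dA := by nlinarith
    have h2 : tB < -dB := by nlinarith
    have h3 : dC < -tA - tB := by linarith
    nlinarith [mul_pos (sub_pos.2 h3) (show (0:ℝ) < -tA - tB + dC by linarith)]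
  · have htB : 0 < tB := by nlinarith
    have h1 : dA < tA := by nlinarith
    have h2 : dB < tB := by nlinarith
    have h3 : dC < tA + tB := by linarith
    nlinarith [mul_pos (sub_pos.2 h3) (show (0:ℝ) < tA + tB + dC by linarith)]

set_option maxHeartbeats 1000000 in
private lemma core (d₁ d₂ d₃ t₁ t₂ t₃ : ℝ) (hd₁ : 0 < d₁) (hd₂ : 0 < d₂) (hd₃ : 0 < d₃)
    (htri₁ : d₁ < d₂ + d₃) (htri₂ : d₂ < d₁ + d₃) (htri₃ : d₃ < d₁ + d₂)
    (hsum : t₁ + t₂ + t₃ = 0)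
    (h12 : (t₁^2-d₁^2)*t₁ = (t₂^2-d₂^2)*t₂)
    (h23 : (t₂^2-d₂^2)*t₂ = (t₃^2-d₃^2)*t₃) :
    (t₁^2-d₁^2) + (t₂^2-d₂^2) + (t₃^2-d₃^2) < 0 := by
  have hq1 := pow_pos hd₁ 2
  have hq2 := pow_pos hd₂ 2
  have hq3 := pow_pos hd₃ 2
  by_cases hw : (t₁^2-d₁^2) * t₁ = 0
  · have hw2 : (t₂^2-d₂^2) * t₂ = 0 := by rw [← h12]; exact hw
    have hw3 : (t₃^2-d₃^2) * t₃ = 0 := by rw [← h23]; exact hw2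
    rcases mul_eq_zero.1 hw with k1 | k1 <;> rcases mul_eq_zero.1 hw2 with k2 | k2 <;>
      rcases mul_eq_zero.1 hw3 with k3 | k3 <;>
      try (subst_vars; nlinarith [hq1, hq2, hq3])
    -- remaining case: all three ψᵢ = 0
    exfalso
    have e1 : (t₁ - d₁) * (t₁ + d₁) = 0 := by linear_combination k1
    have e2 : (t₂ - d₂) * (t₂ + d₂) = 0 := by linear_combination k2
    have e3 : (t₃ - d₃) * (t₃ + d₃) = 0 := by linear_combination k3
    rcases mul_eq_zero.1 e1 with h1 | h1 <;> rcases mul_eq_zero.1 e2 with h2 | h2 <;>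
      rcases mul_eq_zero.1 e3 with h3 | h3 <;> linarith
  · have hw2 : (t₂^2-d₂^2) * t₂ ≠ 0 := by rw [← h12]; exact hw
    have hw3 : (t₃^2-d₃^2) * t₃ ≠ 0 := by rw [← h23]; exact hw2
    have hψ1 : t₁^2-d₁^2 ≠ 0 := left_ne_zero_of_mul hw
    have hψ2 : t₂^2-d₂^2 ≠ 0 := left_ne_zero_of_mul hw2
    have hψ3 : t₃^2-d₃^2 ≠ 0 := left_ne_zero_of_mul hw3
    have hp0 : ((t₁^2-d₁^2) * t₁) *
        ((t₁^2-d₁^2)*(t₂^2-d₂^2) + (t₁^2-d₁^2)*(t₃^2-d₃^2) + (t₂^2-d₂^2)*(t₃^2-d₃^2)) = 0 := by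
      linear_combination ((t₁^2-d₁^2)*(t₂^2-d₂^2)*(t₃^2-d₃^2)) * hsum
        + ((t₁^2-d₁^2)*(t₂^2-d₂^2) + (t₁^2-d₁^2)*(t₃^2-d₃^2)) * h12
        + ((t₁^2-d₁^2)*(t₂^2-d₂^2)) * h23
    have hp : (t₁^2-d₁^2)*(t₂^2-d₂^2) + (t₁^2-d₁^2)*(t₃^2-d₃^2)
        + (t₂^2-d₂^2)*(t₃^2-d₃^2) = 0 := by
      rcases mul_eq_zero.1 hp0 with h | h
      · exact absurd h hw
      · exact h
    rcases hψ1.lt_or_gt with s1 | s1 <;> rcases hψ2.lt_or_gt with s2 | s2 <;>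
      rcases hψ3.lt_or_gt with s3 | s3
    · nlinarith [mul_pos (neg_pos.2 s1) (neg_pos.2 s2), mul_pos (neg_pos.2 s1) (neg_pos.2 s3),
        mul_pos (neg_pos.2 s2) (neg_pos.2 s3)]
    · linarith [lonepos (t₃^2-d₃^2) (t₁^2-d₁^2) (t₂^2-d₂^2) s3 s1 s2 (by linarith)]
    · linarith [lonepos (t₂^2-d₂^2) (t₁^2-d₁^2) (t₃^2-d₃^2) s2 s1 s3 (by linarith)]
    · exact (loneneg d₂ d₃ d₁ t₂ t₃ t₁ hd₂ hd₃ hd₁ htri₁ s2 s3 s1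
        (by linarith) h23 (h12 ▸ hw)).elim
    · linarith [lonepos (t₁^2-d₁^2) (t₂^2-d₂^2) (t₃^2-d₃^2) s1 s2 s3 (by linarith)]
    · exact (loneneg d₁ d₃ d₂ t₁ t₃ t₂ hd₁ hd₃ hd₂ htri₂ s1 s3 s2
        (by linarith) (h12.trans h23) hw).elim
    · exact (loneneg d₁ d₂ d₃ t₁ t₂ t₃ hd₁ hd₂ hd₃ htri₃ s1 s2 s3
        (by linarith) h12 hw).elim
    · nlinarith [mul_pos s1 s2, mul_pos s1 s3, mul_pos s2 s3]

/-- At a collinear equilibrium of the link dynamics, with the distances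
satisfying the strict triangle inequalities, `ψ₁ + ψ₂ + ψ₃ < 0`. -/
theorem stmt_5 (d₁ d₂ d₃ : ℝ) (hd₁ : 0 < d₁) (hd₂ : 0 < d₂) (hd₃ : 0 < d₃)
    (htri₁ : d₁ < d₂ + d₃) (htri₂ : d₂ < d₁ + d₃) (htri₃ : d₃ < d₁ + d₂)
    (e₁ e₂ e₃ : EuclideanSpace ℝ (Fin 2))
    (ψ₁ ψ₂ ψ₃ : ℝ)
    (hψ₁ : ψ₁ = ‖e₁‖ ^ 2 - d₁ ^ 2) (hψ₂ : ψ₂ = ‖e₂‖ ^ 2 - d₂ ^ 2)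
    (hψ₃ : ψ₃ = ‖e₃‖ ^ 2 - d₃ ^ 2)
    (hsum : e₁ + e₂ + e₃ = 0)
    (heq₁₂ : ψ₁ • e₁ = ψ₂ • e₂) (heq₂₃ : ψ₂ • e₂ = ψ₃ • e₃)
    (hcol : crossJ e₁ e₂ = 0) :
    ψ₁ + ψ₂ + ψ₃ < 0 := by
  subst hψ₁ hψ₂ hψ₃
  by_cases h1 : e₁ = 0
  · by_cases h2 : e₂ = 0
    · have h3 : e₃ = 0 := by
        rw [h1, h2] at hsum
        simpa using hsum
      rw [h1, h2, h3, norm_zero]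
      nlinarith [pow_pos hd₁ 2, pow_pos hd₂ 2, pow_pos hd₃ 2]
    · have hz2 : ‖e₂‖ ^ 2 - d₂ ^ 2 = 0 := by
        rw [h1, smul_zero] at heq₁₂
        rcases smul_eq_zero.1 heq₁₂.symm with h | h
        · exact h
        · exact absurd h h2
      have h3 : e₃ = -e₂ := by
        rw [h1] at hsum
        have : e₂ + e₃ = 0 := by simpa using hsum
        linear_combination (norm := module) this
      have hz3 : ‖e₃‖ ^ 2 - d₃ ^ 2 = 0 := by
        rw [hz2, zero_smul] at heq₂₃
        rcases smul_eq_zero.1 heq₂₃.symm with h | h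
        · exact h
        · rw [h3] at h
          exact absurd (neg_eq_zero.1 h) h2
      rw [h1, norm_zero, hz2, hz3]
      nlinarith [pow_pos hd₁ 2]
  · unfold crossJ at hcol
    obtain ⟨t, ht⟩ := collin e₁ e₂ h1 hcol
    have he₃ : e₃ = (-(1+t)) • e₁ := by
      have h' : e₃ = -(e₁ + e₂) := by
        linear_combination (norm := module) hsum
      rw [h', ht]
      module
    have hn2 : ‖e₂‖ ^ 2 = t ^ 2 * ‖e₁‖ ^ 2 := by
      rw [ht, norm_smul, mul_pow, Real.norm_eq_abs, sq_abs]
    have hn3 : ‖e₃‖ ^ 2 = (1+t) ^ 2 * ‖e₁‖ ^ 2 := by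
      rw [he₃, norm_smul, mul_pow, Real.norm_eq_abs, sq_abs]
      ring
    have h12' : ‖e₁‖ ^ 2 - d₁ ^ 2 = (‖e₂‖ ^ 2 - d₂ ^ 2) * t := by
      have h' : ((‖e₁‖ ^ 2 - d₁ ^ 2) - (‖e₂‖ ^ 2 - d₂ ^ 2) * t) • e₁ = 0 := by
        rw [sub_smul, mul_smul, ← ht, heq₁₂, sub_self]
      rcases smul_eq_zero.1 h' with h | h
      · exact sub_eq_zero.1 h
      · exact absurd h h1
    have h23' : (‖e₂‖ ^ 2 - d₂ ^ 2) * t = (‖e₃‖ ^ 2 - d₃ ^ 2) * (-(1+t)) := by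
      have h' : ((‖e₂‖ ^ 2 - d₂ ^ 2) * t - (‖e₃‖ ^ 2 - d₃ ^ 2) * (-(1+t))) • e₁ = 0 := by
        rw [sub_smul, mul_smul, mul_smul, ← ht, ← he₃, heq₂₃, sub_self]
      rcases smul_eq_zero.1 h' with h | h
      · exact sub_eq_zero.1 h
      · exact absurd h h1
    have key := core d₁ d₂ d₃ ‖e₁‖ (t * ‖e₁‖) (-(1+t) * ‖e₁‖) hd₁ hd₂ hd₃
      htri₁ htri₂ htri₃ (by ring)
      (by linear_combination ‖e₁‖ * h12' + (t * ‖e₁‖) * hn2)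
      (by linear_combination ‖e₁‖ * h23' - (t * ‖e₁‖) * hn2 - ((1+t) * ‖e₁‖) * hn3)
    nlinarith [key, hn2, hn3]
end

section
/- If d₁, d₂, d₃ > 0 satisfy the strict triangle inequalities, then the symmetric block matrix Γ = [[(2d₁² + 4d₂²)I₂, (d₁² - 3d₂² - d₃²)I₂], [(d₁² - 3d₂² - d₃²)I₂, (2d₂² + 4d₃²)I₂]] is positive definite. -/
private lemma quad_nonneg (a b c u v : ℝ) (ha : 0 < a) (hd : b ^ 2 < a * c) :
    0 ≤ a * u ^ 2 + 2 * b * (u * v) + c * v ^ 2 := by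
  nlinarith [sq_nonneg (a * u + b * v), mul_nonneg (by nlinarith [sq_nonneg b] : (0:ℝ) ≤ a * c - b ^ 2) (sq_nonneg v)]

private lemma quad_pos (a b c u v : ℝ) (ha : 0 < a) (hd : b ^ 2 < a * c)
    (h : u ≠ 0 ∨ v ≠ 0) : 0 < a * u ^ 2 + 2 * b * (u * v) + c * v ^ 2 := by
  rcases eq_or_ne v 0 with hv | hv
  · have hu : u ≠ 0 := by rcases h with h | h; exact h; exact absurd hv h
    subst hv
    have : 0 < u ^ 2 := by positivity
    nlinarith
  · nlinarith [sq_nonneg (a * u + b * v),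
      mul_pos (by nlinarith : (0:ℝ) < a * c - b ^ 2) (by positivity : (0:ℝ) < v ^ 2)]

/-- If the distances satisfy the strict triangle inequalities, then the 4×4
block matrix `Γ` from the collocated-set Jacobian computation is positive
definite. -/
theorem stmt_6 (d₁ d₂ d₃ : ℝ) (hd₁ : 0 < d₁) (hd₂ : 0 < d₂) (hd₃ : 0 < d₃)
    (htri₁ : d₁ < d₂ + d₃) (htri₂ : d₂ < d₁ + d₃) (htri₃ : d₃ < d₁ + d₂) :
    (Matrix.fromBlocks
      ((2 * d₁ ^ 2 + 4 * d₂ ^ 2) • (1 : Matrix (Fin 2) (Fin 2) ℝ))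
      ((d₁ ^ 2 - 3 * d₂ ^ 2 - d₃ ^ 2) • (1 : Matrix (Fin 2) (Fin 2) ℝ))
      ((d₁ ^ 2 - 3 * d₂ ^ 2 - d₃ ^ 2) • (1 : Matrix (Fin 2) (Fin 2) ℝ))
      ((2 * d₂ ^ 2 + 4 * d₃ ^ 2) • (1 : Matrix (Fin 2) (Fin 2) ℝ))).PosDef := by
  set a : ℝ := 2 * d₁ ^ 2 + 4 * d₂ ^ 2 with ha
  set b : ℝ := d₁ ^ 2 - 3 * d₂ ^ 2 - d₃ ^ 2 with hb
  set c : ℝ := 2 * d₂ ^ 2 + 4 * d₃ ^ 2 with hc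
  have hapos : 0 < a := by positivity
  have hdet : b ^ 2 < a * c := by
    rw [ha, hb, hc]
    nlinarith [mul_pos (mul_pos (mul_pos (add_pos (add_pos hd₁ hd₂) hd₃)
      (sub_pos.2 htri₁)) (sub_pos.2 htri₂)) (sub_pos.2 htri₃),
      sq_nonneg (d₁*d₂), sq_nonneg (d₂*d₃), sq_nonneg (d₁*d₃),
      mul_pos hd₁ hd₂, mul_pos hd₂ hd₃, mul_pos hd₁ hd₃]
  rw [Matrix.posDef_iff_dotProduct_mulVec]
  constructor
  · show _ = _
    ext i j
    rcases i with i | i <;> rcases j with j | j <;>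
      simp [Matrix.fromBlocks, Matrix.conjTranspose_apply, Matrix.one_apply] <;>
      aesop
  · intro x hx
    have hx' : x (Sum.inl 0) ≠ 0 ∨ x (Sum.inl 1) ≠ 0 ∨ x (Sum.inr 0) ≠ 0 ∨
        x (Sum.inr 1) ≠ 0 := by
      by_contra h
      push_neg at h
      apply hx
      funext i
      rcases i with i | i <;> fin_cases i <;> simp [h.1, h.2.1, h.2.2.1, h.2.2.2]
    set x0 := x (Sum.inl 0)
    set x1 := x (Sum.inl 1)
    set y0 := x (Sum.inr 0)
    set y1 := x (Sum.inr 1)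
    have hform : dotProduct (star x)
        ((Matrix.fromBlocks (a • (1 : Matrix (Fin 2) (Fin 2) ℝ))
          (b • (1 : Matrix (Fin 2) (Fin 2) ℝ))
          (b • (1 : Matrix (Fin 2) (Fin 2) ℝ))
          (c • (1 : Matrix (Fin 2) (Fin 2) ℝ))).mulVec x) =
        a * (x0 ^ 2 + x1 ^ 2) + 2 * b * (x0 * y0 + x1 * y1)
          + c * (y0 ^ 2 + y1 ^ 2) := by
      simp [dotProduct, Matrix.mulVec, Fintype.sum_sum_type,
        Fin.sum_univ_two, Matrix.fromBlocks, Matrix.one_apply]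
      ring
    rw [hform]
    have hsplit : a * (x0 ^ 2 + x1 ^ 2) + 2 * b * (x0 * y0 + x1 * y1)
        + c * (y0 ^ 2 + y1 ^ 2) =
        (a * x0 ^ 2 + 2 * b * (x0 * y0) + c * y0 ^ 2)
        + (a * x1 ^ 2 + 2 * b * (x1 * y1) + c * y1 ^ 2) := by ring
    rw [hsplit]
    rcases hx' with h | h | h | h
    · exact add_pos_of_pos_of_nonneg (quad_pos a b c x0 y0 hapos hdet (Or.inl h))
        (quad_nonneg a b c x1 y1 hapos hdet)
    · exact add_pos_of_nonneg_of_pos (quad_nonneg a b c x0 y0 hapos hdet)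
        (quad_pos a b c x1 y1 hapos hdet (Or.inl h))
    · exact add_pos_of_pos_of_nonneg (quad_pos a b c x0 y0 hapos hdet (Or.inr h))
        (quad_nonneg a b c x1 y1 hapos hdet)
    · exact add_pos_of_nonneg_of_pos (quad_nonneg a b c x0 y0 hapos hdet)
        (quad_pos a b c x1 y1 hapos hdet (Or.inr h))
end

section
/- Positive definiteness of the 2×2 matrix [[2d₁² + 4d₂², d₁² - 3d₂² - d₃²], [d₁² - 3d₂² - d₃², 2d₂² + 4d₃²]] holds if and only if (2d₁² + 4d₂²)(2d₂² + 4d₃²) > (d₁² - 3d₂² - d₃²)²; moreover this strict inequality holds whenever d₁, d₂, d₃ > 0 satisfy the strict triangle inequalities. -/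
lemma posDef_fin_two {a b c : ℝ} (ha : 0 < a) (h : b ^ 2 < a * c) :
    (Matrix.of ![![a, b], ![b, c]]).PosDef := by
  refine Matrix.PosDef.of_dotProduct_mulVec_pos ?_ ?_
  · ext i j
    fin_cases i <;> fin_cases j <;> simp [Matrix.IsHermitian]
  · intro x hx
    have hx' : x 0 ≠ 0 ∨ x 1 ≠ 0 := by
      by_contra hcon
      push_neg at hcon
      apply hx
      ext i; fin_cases i <;> simp [hcon.1, hcon.2]
    have key : dotProduct (star x) ((Matrix.of ![![a, b], ![b, c]]).mulVec x)
        = a * x 0 ^ 2 + 2 * b * x 0 * x 1 + c * x 1 ^ 2 := by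
      simp [dotProduct, Matrix.mulVec, Fin.sum_univ_two]
      ring
    rw [key]
    by_cases h1 : x 1 = 0
    · have h0 : x 0 ≠ 0 := hx'.resolve_right (by simp [h1])
      have h0' : 0 < x 0 ^ 2 := by positivity
      rw [h1]
      nlinarith
    · have h1' : 0 < x 1 ^ 2 := by positivity
      nlinarith [sq_nonneg (a * x 0 + b * x 1)]

/-- The 2×2 scalar matrix from the collocated-set computation is positive
definite iff `(2d₁² + 4d₂²)(2d₂² + 4d₃²) > (d₁² - 3d₂² - d₃²)²`; moreover this
inequality holds under the strict triangle inequalities. -/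
theorem stmt_7 (d₁ d₂ d₃ : ℝ) (hd₁ : 0 < d₁) (hd₂ : 0 < d₂) (hd₃ : 0 < d₃) :
    ((Matrix.of ![![2 * d₁ ^ 2 + 4 * d₂ ^ 2, d₁ ^ 2 - 3 * d₂ ^ 2 - d₃ ^ 2],
        ![d₁ ^ 2 - 3 * d₂ ^ 2 - d₃ ^ 2, 2 * d₂ ^ 2 + 4 * d₃ ^ 2]]).PosDef ↔
      (2 * d₁ ^ 2 + 4 * d₂ ^ 2) * (2 * d₂ ^ 2 + 4 * d₃ ^ 2) >
        (d₁ ^ 2 - 3 * d₂ ^ 2 - d₃ ^ 2) ^ 2) ∧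
    (d₁ < d₂ + d₃ → d₂ < d₁ + d₃ → d₃ < d₁ + d₂ →
      (2 * d₁ ^ 2 + 4 * d₂ ^ 2) * (2 * d₂ ^ 2 + 4 * d₃ ^ 2) >
        (d₁ ^ 2 - 3 * d₂ ^ 2 - d₃ ^ 2) ^ 2) := by
  constructor
  · constructor
    · intro h
      have hdet := h.det_pos
      rw [Matrix.det_fin_two] at hdet
      simp only [Matrix.of_apply, Matrix.cons_val', Matrix.cons_val_zero, Matrix.cons_val_one,
        Matrix.head_cons, Matrix.empty_val', Matrix.cons_val_fin_one, Matrix.head_fin_const] at hdet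
      nlinarith [hdet]
    · intro h
      exact posDef_fin_two (by positivity) (by nlinarith)
  · intro h1 h2 h3
    nlinarith [mul_pos (mul_pos (show (0:ℝ) < d₂ + d₃ - d₁ by linarith)
        (show (0:ℝ) < d₁ + d₃ - d₂ by linarith)) (show (0:ℝ) < d₁ + d₂ - d₃ by linarith),
      mul_pos hd₁ hd₂, mul_pos hd₂ hd₃, mul_pos hd₁ hd₃,
      sq_nonneg (d₁*d₂ + d₂*d₃ + d₁*d₃), mul_pos (mul_pos hd₁ hd₂) hd₃,
      sq_nonneg (d₁ - d₂), sq_nonneg (d₂ - d₃), sq_nonneg (d₁ - d₃)]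
end

section
/- Let M ⊆ ℝⁿ be the zero set of a C¹ function F : ℝⁿ → ℝ^{n-m} whose Jacobian has full rank n-m at every point of M, and let f : ℝⁿ → ℝⁿ be a C² vector field with f(p) ∈ ker F_x(p) (tangency/invariance) for all p ∈ M. Fix p ∈ M and a unit normal n_p = F_x(p)ᵀc. Then ⟨f(p + ε n_p), n_p⟩ = (ε/2)·cᵀ F_x(p)(f_x(p) + f_x(p)ᵀ)F_x(p)ᵀ c + O(ε²) as ε → 0. -/
open Asymptotics

theorem taylor1_isBigO (φ : ℝ → ℝ) (hφ : ContDiff ℝ 2 φ) :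
    (fun ε : ℝ => φ ε - φ 0 - ε * deriv φ 0) =O[nhds 0] fun ε : ℝ => ε ^ 2 := by
  have hd : Differentiable ℝ φ := hφ.differentiable two_ne_zero
  have hd' : DifferentiableAt ℝ (deriv φ) 0 :=
    ((hφ.iterate_deriv' 1 1).differentiable (by norm_num)).differentiableAt
  have hO : (fun ε : ℝ => deriv φ ε - deriv φ 0) =O[nhds 0] fun ε : ℝ => ε := by
    simpa using hd'.isBigO_sub
  rw [isBigO_iff] at hO ⊢
  obtain ⟨C, hC⟩ := hO
  rw [Metric.eventually_nhds_iff] at hC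
  obtain ⟨δ, hδ, hCδ⟩ := hC
  refine ⟨max C 0, Metric.eventually_nhds_iff.mpr ⟨δ, hδ, fun ε hε => ?_⟩⟩
  set C' := max C 0 with hC'
  have hC0 : 0 ≤ C' := le_max_right _ _
  have hCle : C ≤ C' := le_max_left _ _
  have key : ∀ t ∈ Metric.closedBall (0:ℝ) ‖ε‖,
      ‖deriv φ t - deriv φ 0‖ ≤ C' * ‖ε‖ := by
    intro t ht
    have ht' : ‖t‖ ≤ ‖ε‖ := by simpa using ht
    have htδ : dist t 0 < δ := by
      simp only [dist_zero_right] at *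
      calc ‖t‖ ≤ ‖ε‖ := ht'
        _ < δ := by simpa [dist_zero_right] using hε
    calc ‖deriv φ t - deriv φ 0‖ ≤ C * ‖t‖ := hCδ htδ
      _ ≤ C' * ‖ε‖ := by nlinarith [norm_nonneg t, norm_nonneg (deriv φ t - deriv φ 0)]
  have hder : ∀ t ∈ Metric.closedBall (0:ℝ) ‖ε‖,
      HasDerivWithinAt (fun t => φ t - t * deriv φ 0) (deriv φ t - deriv φ 0)
        (Metric.closedBall (0:ℝ) ‖ε‖) t := by
    intro t ht
    exact ((hd t).hasDerivAt.sub ((hasDerivAt_id t).mul_const _)).hasDerivWithinAt.congr_deriv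
      (by ring)
  have hmem0 : (0:ℝ) ∈ Metric.closedBall (0:ℝ) ‖ε‖ := by simp
  have hmemε : ε ∈ Metric.closedBall (0:ℝ) ‖ε‖ := by simp
  have := (convex_closedBall (0:ℝ) ‖ε‖).norm_image_sub_le_of_norm_hasDerivWithin_le
    hder key hmem0 hmemε
  calc ‖φ ε - φ 0 - ε * deriv φ 0‖ = ‖(φ ε - ε * deriv φ 0) - (φ 0 - 0 * deriv φ 0)‖ := by
        ring_nf
    _ ≤ C' * ‖ε‖ * ‖ε - 0‖ := this
    _ = C' * ‖ε ^ 2‖ := by rw [sub_zero]; rw [show ε^2 = ε*ε by ring, norm_mul]; ring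

/-- Taylor expansion of the normal component of the vector field near an
invariant manifold `M = F⁻¹(0)`: for `p ∈ M` and a unit normal
`n_p = F_x(p)ᵀc`,
`⟨f(p + ε n_p), n_p⟩ = (ε/2)·cᵀ F_x(p)(f_x(p) + f_x(p)ᵀ)F_x(p)ᵀ c + O(ε²)`. -/
theorem stmt_14 (n k : ℕ)
    (F : EuclideanSpace ℝ (Fin n) → EuclideanSpace ℝ (Fin k))
    (f : EuclideanSpace ℝ (Fin n) → EuclideanSpace ℝ (Fin n))
    (hF : ContDiff ℝ 1 F) (hf : ContDiff ℝ 2 f)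
    (hrank : ∀ p, F p = 0 → Function.Surjective (fderiv ℝ F p))
    (htang : ∀ p, F p = 0 → fderiv ℝ F p (f p) = 0)
    (p : EuclideanSpace ℝ (Fin n)) (hp : F p = 0)
    (c : EuclideanSpace ℝ (Fin k))
    (np : EuclideanSpace ℝ (Fin n))
    (hnp : np = ContinuousLinearMap.adjoint (fderiv ℝ F p) c)
    (hunit : ‖np‖ = 1) :
    (fun ε : ℝ =>
        (inner ℝ (f (p + ε • np)) np : ℝ) -
          (ε / 2) * ((inner ℝ ((fderiv ℝ f p) np) np : ℝ) +
            (inner ℝ (ContinuousLinearMap.adjoint (fderiv ℝ f p) np) np : ℝ)))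
      =O[nhds 0] fun ε : ℝ => ε ^ 2 := by
  set φ : ℝ → ℝ := fun ε => (inner ℝ (f (p + ε • np)) np : ℝ) with hφdef
  set A : ℝ := inner ℝ ((fderiv ℝ f p) np) np with hA
  have hBA : (inner ℝ (ContinuousLinearMap.adjoint (fderiv ℝ f p) np) np : ℝ) = A := by
    rw [hA, ContinuousLinearMap.adjoint_inner_left, real_inner_comm]
  have hγcd : ContDiff ℝ 2 (fun ε : ℝ => p + ε • np) :=
    contDiff_const.add (contDiff_id.smul contDiff_const)
  have hφ : ContDiff ℝ 2 φ := (hf.comp hγcd).inner ℝ contDiff_const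
  have hpt : p + (0:ℝ) • np = p := by simp
  have h0 : φ 0 = 0 := by
    simp only [hφdef, hpt]
    rw [hnp, real_inner_comm, ContinuousLinearMap.adjoint_inner_left, htang p hp,
      inner_zero_right]
  have hγ : HasDerivAt (fun ε : ℝ => p + ε • np) np 0 := by
    simpa using ((hasDerivAt_id (0:ℝ)).smul_const np).const_add p
  have hff : HasFDerivAt f (fderiv ℝ f p) (p + (0:ℝ) • np) := by
    rw [hpt]
    exact (hf.differentiable two_ne_zero p).hasFDerivAt
  have hfγ : HasDerivAt (fun ε : ℝ => f (p + ε • np)) ((fderiv ℝ f p) np) 0 :=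
    hff.comp_hasDerivAt 0 hγ
  have hφ' : HasDerivAt φ A 0 := by
    have := hfγ.inner ℝ (hasDerivAt_const (0:ℝ) np)
    simpa [hφdef, hpt, hA] using this
  have hd0 : deriv φ 0 = A := hφ'.deriv
  have := taylor1_isBigO φ hφ
  rw [h0, hd0] at this
  refine this.congr' (Filter.Eventually.of_forall fun ε => ?_) (Filter.Eventually.of_forall fun ε => rfl)
  simp only [hBA]
  ring
end

section
/- If the distances d₁, d₂, d₃ > 0 satisfy the strict triangle inequalities, then the target formation set E_e = {e : e₁+e₂+e₃ = 0, ‖eᵢ‖ = dᵢ for i = 1,2,3} and the line set N_e = {e : e₁+e₂+e₃ = 0, e₁ᵀJe₂ = 0} are disjoint. -/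
lemma normsq_eq (x : EuclideanSpace ℝ (Fin 2)) : ‖x‖ ^ 2 = x 0 ^ 2 + x 1 ^ 2 := by
  rw [EuclideanSpace.norm_eq, Real.sq_sqrt (by positivity), Fin.sum_univ_two]
  simp [sq_abs]

/-- Under the strict triangle inequalities, the target formation set and the
line set are disjoint. -/
theorem stmt_16 (d₁ d₂ d₃ : ℝ) (hd₁ : 0 < d₁) (hd₂ : 0 < d₂) (hd₃ : 0 < d₃)
    (htri₁ : d₁ < d₂ + d₃) (htri₂ : d₂ < d₁ + d₃) (htri₃ : d₃ < d₁ + d₂) :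
    Disjoint
      {e : EuclideanSpace ℝ (Fin 2) × EuclideanSpace ℝ (Fin 2) × EuclideanSpace ℝ (Fin 2) |
        e.1 + e.2.1 + e.2.2 = 0 ∧ ‖e.1‖ = d₁ ∧ ‖e.2.1‖ = d₂ ∧ ‖e.2.2‖ = d₃}
      {e : EuclideanSpace ℝ (Fin 2) × EuclideanSpace ℝ (Fin 2) × EuclideanSpace ℝ (Fin 2) |
        e.1 + e.2.1 + e.2.2 = 0 ∧ crossJ e.1 e.2.1 = 0} := by
  rw [Set.disjoint_left]
  rintro ⟨x, y, z⟩ ⟨hsum, h1, h2, h3⟩ ⟨_, hc⟩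
  simp only at hsum h1 h2 h3 hc
  have h0 : (x + y + z) 0 = 0 := by rw [hsum]; rfl
  have h1' : (x + y + z) 1 = 0 := by rw [hsum]; rfl
  simp only [PiLp.add_apply] at h0 h1'
  have e1 : d₁ ^ 2 = x 0 ^ 2 + x 1 ^ 2 := by rw [← h1, normsq_eq]
  have e2 : d₂ ^ 2 = y 0 ^ 2 + y 1 ^ 2 := by rw [← h2, normsq_eq]
  have e3 : d₃ ^ 2 = z 0 ^ 2 + z 1 ^ 2 := by rw [← h3, normsq_eq]
  unfold crossJ at hc
  have hz0 : z 0 = -(x 0 + y 0) := by linarith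
  have hz1 : z 1 = -(x 1 + y 1) := by linarith
  have hs : d₃ ^ 2 = d₁ ^ 2 + d₂ ^ 2 + 2 * (x 0 * y 0 + x 1 * y 1) := by
    rw [e1, e2, e3, hz0, hz1]; ring
  have hp : (x 0 * y 0 + x 1 * y 1) ^ 2 = d₁ ^ 2 * d₂ ^ 2 := by
    rw [e1, e2]; linear_combination (-(x 0 * y 1 - x 1 * y 0)) * hc
  have key : (d₃ ^ 2 - d₁ ^ 2 - d₂ ^ 2) ^ 2 = 4 * d₁ ^ 2 * d₂ ^ 2 := by
    linear_combination (d₃ ^ 2 - d₁ ^ 2 - d₂ ^ 2 + 2 * (x 0 * y 0 + x 1 * y 1)) * hs + 4 * hp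
  have f1 : d₃ ^ 2 - (d₁ + d₂) ^ 2 < 0 := by nlinarith
  have f2 : 0 < d₃ ^ 2 - (d₁ - d₂) ^ 2 := by nlinarith
  have hprod : (d₃ ^ 2 - (d₁ - d₂) ^ 2) * (d₃ ^ 2 - (d₁ + d₂) ^ 2) = 0 := by
    linear_combination key
  exact (mul_neg_of_pos_of_neg f2 f1).ne hprod
end
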